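/- Sewing lemma: Let E be a Banach space, θ > 1 and c₁ > 0, and let μ = (μ_{ts})_{0 ≤ s ≤ t ≤ 1} be a family of elements of E such that ‖μ_{ts} − (μ_{tu} + μ_{us})‖ ≤ c₁ (t − s)^θ for all 0 ≤ s ≤ u ≤ t ≤ 1. Then there exists a constant C (depending only on c₁ and θ) and a unique function φ : [0,1] → E with φ₀ = 0 such that ‖φ_t − φ_s − μ_{ts}‖ ≤ C (t − s)^θ for all 0 ≤ s ≤ t ≤ 1; uniqueness means that any two functions vanishing at 0 and satisfying such a bound (with possibly different constants) coincide. -/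

import Mathlib

open Finset Filter
open scoped Classical

namespace SewingAux

/-- clamp `x` into `[s,t]` -/
noncomputable def cl (s t x : ℝ) : ℝ := max s (min t x)

lemma cl_mono {s t : ℝ} : Monotone (cl s t) := fun x y hxy =>
  max_le_max le_rfl (min_le_min le_rfl hxy)

lemma le_cl (s t x : ℝ) : s ≤ cl s t x := le_max_left _ _

lemma cl_le {s t : ℝ} (h : s ≤ t) (x : ℝ) : cl s t x ≤ t := max_le h (min_le_left _ _)

lemma cl_sub_cl {s t x y : ℝ} (hxy : x ≤ y) : cl s t y - cl s t x ≤ y - x := by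
  unfold cl
  simp only [max_def, min_def]
  split_ifs <;> linarith

lemma cl_of_between {s t x : ℝ} (h1 : s ≤ x) (h2 : x ≤ t) : cl s t x = x := by
  unfold cl
  rw [min_eq_right h2, max_eq_right h1]

lemma cl_of_le {s t x : ℝ} (h1 : x ≤ s) (h2 : s ≤ t) : cl s t x = s := by
  unfold cl
  rw [min_eq_right (h1.trans h2), max_eq_left h1]

lemma cl_of_ge {s t x : ℝ} (h1 : t ≤ x) (h2 : s ≤ t) : cl s t x = t := by
  unfold cl
  rw [min_eq_left h1, max_eq_right h2]


lemma sum_pair {E : Type*} [AddCommGroup E] (m : ℕ) (g : ℕ → E) :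
    ∑ k ∈ Finset.range (2*m), g k = ∑ k ∈ Finset.range m, (g (2*k) + g (2*k+1)) := by
  induction m with
  | zero => simp
  | succ m ih =>
    have h2 : 2*(m+1) = (2*m+1)+1 := by omega
    rw [h2, Finset.sum_range_succ, Finset.sum_range_succ, ih, Finset.sum_range_succ]
    abel

section Main

variable {E : Type*} [NormedAddCommGroup E] [NormedSpace ℝ E]
variable (μ : ℝ → ℝ → E) (θ c₁ : ℝ)

/-- the clamped dyadic Riemann sum -/
noncomputable def F (s t : ℝ) (n : ℕ) : E :=
  ∑ k ∈ Finset.range (2^n), μ (cl s t (((k:ℝ)+1)/2^n)) (cl s t ((k:ℝ)/2^n))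

/-- midpoint of the `k`-th dyadic interval of level `n` -/
noncomputable def mid (n k : ℕ) : ℝ := (2*(k:ℝ)+1)/2^(n+1)

/-- the weight controlling `F (n+1) - F n` -/
noncomputable def W (s t : ℝ) (n : ℕ) : ℝ :=
  ∑ _k ∈ (Finset.range (2^n)).filter (fun k => s < mid n k ∧ mid n k < t),
    (min ((2^n:ℝ))⁻¹ (t-s))^θ

variable {μ θ c₁}
variable (hθ : 1 < θ) (hc₁ : 0 < c₁)
variable (hμ : ∀ s u t : ℝ, 0 ≤ s → s ≤ u → u ≤ t → t ≤ 1 →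
      ‖μ t s - (μ t u + μ u s)‖ ≤ c₁ * (t - s) ^ θ)
include hθ hc₁ hμ

omit hc₁ in
lemma mu_self (x : ℝ) (h0 : 0 ≤ x) (h1 : x ≤ 1) : μ x x = 0 := by
  have h := hμ x x x h0 le_rfl le_rfl h1
  rw [sub_self, Real.zero_rpow (by positivity), mul_zero] at h
  have : ‖μ x x‖ ≤ 0 := by
    have : μ x x - (μ x x + μ x x) = -(μ x x) := by abel
    rwa [this, norm_neg] at h
  simpa using le_antisymm this (norm_nonneg _)


omit hθ hc₁ hμ in
lemma two_pow_aux (θ : ℝ) (n : ℕ) : (2:ℝ)^n * (((2:ℝ)^n)⁻¹)^θ = ((2:ℝ)^(1-θ:ℝ))^n := by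
  have h2 : (0:ℝ) ≤ 2 := by norm_num
  rw [← Real.rpow_natCast 2 n, ← Real.rpow_neg h2, ← Real.rpow_natCast ((2:ℝ)^(1-θ:ℝ)) n,
    ← Real.rpow_mul h2, ← Real.rpow_mul h2, ← Real.rpow_add (by norm_num : (0:ℝ) < 2)]
  congr 1
  ring

lemma step_bound (s t : ℝ) (hs : 0 ≤ s) (hst : s ≤ t) (ht : t ≤ 1) (n : ℕ) :
    ‖F μ s t (n+1) - F μ s t n‖ ≤ c₁ * W θ s t n := by
  have h2n : (0:ℝ) < 2^n := by positivity
  have h2n1 : (0:ℝ) < 2^(n+1) := by positivity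
  have hpair : F μ s t (n+1) = ∑ k ∈ Finset.range (2^n),
      (μ (cl s t (mid n k)) (cl s t ((k:ℝ)/2^n))
       + μ (cl s t (((k:ℝ)+1)/2^n)) (cl s t (mid n k))) := by
    unfold F
    have hN : (2:ℕ)^(n+1) = 2*2^n := by ring
    rw [hN, sum_pair]
    refine Finset.sum_congr rfl fun k _ => ?_
    have e1 : ((2*k:ℕ):ℝ)/2^(n+1) = (k:ℝ)/2^n := by push_cast; field_simp; ring
    have e2 : (((2*k:ℕ):ℝ)+1)/2^(n+1) = mid n k := by unfold mid; push_cast; ring_nf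
    have e3 : ((2*k+1:ℕ):ℝ)/2^(n+1) = mid n k := by unfold mid; push_cast; ring_nf
    have e4 : (((2*k+1:ℕ):ℝ)+1)/2^(n+1) = ((k:ℝ)+1)/2^n := by push_cast; field_simp; ring
    rw [e1, e2, e3, e4]
  rw [hpair]
  unfold F W
  rw [← Finset.sum_sub_distrib]
  refine (norm_sum_le _ _).trans ?_
  rw [Finset.sum_filter, Finset.mul_sum]
  refine Finset.sum_le_sum fun k hk => ?_
  set a := (k:ℝ)/2^n with ha
  set b := ((k:ℝ)+1)/2^n with hb
  have hma : mid n k - a = ((2:ℝ)^(n+1))⁻¹ := by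
    unfold mid; rw [ha]; field_simp; ring
  have hbm : b - mid n k = ((2:ℝ)^(n+1))⁻¹ := by
    unfold mid; rw [hb]; field_simp; ring
  have hba : b - a = ((2:ℝ)^n)⁻¹ := by
    rw [ha, hb]; field_simp; ring
  have ham : a ≤ mid n k := by
    have : (0:ℝ) < ((2:ℝ)^(n+1))⁻¹ := by positivity
    linarith
  have hmb : mid n k ≤ b := by
    have : (0:ℝ) < ((2:ℝ)^(n+1))⁻¹ := by positivity
    linarith
  by_cases hP : s < mid n k ∧ mid n k < t
  · rw [if_pos hP]
    set A := cl s t a with hA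
    set M := cl s t (mid n k) with hM
    set B := cl s t b with hB
    have h0A : 0 ≤ A := hs.trans (le_cl s t a)
    have hAM : A ≤ M := cl_mono ham
    have hMB : M ≤ B := cl_mono hmb
    have hB1 : B ≤ 1 := (cl_le hst b).trans ht
    have hkey := hμ A M B h0A hAM hMB hB1
    have hre : (μ M A + μ B M) - μ B A = -(μ B A - (μ B M + μ M A)) := by abel
    rw [hre, norm_neg]
    refine hkey.trans (mul_le_mul_of_nonneg_left ?_ (le_of_lt hc₁))
    refine Real.rpow_le_rpow (by linarith) ?_ (by linarith)
    refine le_min ?_ ?_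
    · have := cl_sub_cl (s := s) (t := t) (ham.trans hmb)
      rw [hba] at this
      exact this
    · have h1 := cl_le hst b
      have h2 := le_cl s t a
      rw [← hB] at h1; rw [← hA] at h2
      linarith
  · rw [if_neg hP, mul_zero]
    rcases not_and_or.mp hP with hm | hm
    · push_neg at hm
      have hMs : cl s t (mid n k) = s := cl_of_le hm hst
      have hAs : cl s t a = s := cl_of_le (ham.trans hm) hst
      have : (μ (cl s t (mid n k)) (cl s t a) + μ (cl s t b) (cl s t (mid n k)))
          - μ (cl s t b) (cl s t a) = μ s s := by rw [hMs, hAs]; abel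
      rw [this, mu_self hθ hμ s hs (hst.trans ht), norm_zero]
    · push_neg at hm
      have hMt : cl s t (mid n k) = t := cl_of_ge hm hst
      have hBt : cl s t b = t := cl_of_ge (hm.trans hmb) hst
      have : (μ (cl s t (mid n k)) (cl s t a) + μ (cl s t b) (cl s t (mid n k)))
          - μ (cl s t b) (cl s t a) = μ t t := by rw [hMt, hBt]; abel
      rw [this, mu_self hθ hμ t (hs.trans hst) ht, norm_zero]

omit hc₁ hμ in
lemma W_le_crude (s t : ℝ) (hst : s ≤ t) (n : ℕ) : W θ s t n ≤ ((2:ℝ)^(1-θ:ℝ))^n := by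
  unfold W
  rw [Finset.sum_const, nsmul_eq_mul]
  have hθ0 : (0:ℝ) ≤ θ := by linarith
  have hcard : ((Finset.filter (fun k => s < mid n k ∧ mid n k < t)
      (Finset.range (2^n))).card : ℝ) ≤ (2:ℝ)^n := by
    have h1 : (Finset.filter (fun k => s < mid n k ∧ mid n k < t)
        (Finset.range (2^n))).card ≤ 2^n := by
      exact le_trans (Finset.card_filter_le _ _) (by simp)
    exact_mod_cast h1
  have hmin : (min ((2^n:ℝ))⁻¹ (t-s))^θ ≤ (((2:ℝ)^n)⁻¹)^θ := by
    refine Real.rpow_le_rpow ?_ (min_le_left _ _) hθ0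
    exact le_min (by positivity) (by linarith)
  calc _ ≤ (2:ℝ)^n * (((2:ℝ)^n)⁻¹)^θ := by
        refine mul_le_mul hcard hmin ?_ (by positivity)
        exact Real.rpow_nonneg (le_min (by positivity) (by linarith)) θ
    _ = _ := two_pow_aux θ n


omit hθ hc₁ hμ in
lemma cl_zero_eq (s t x : ℝ) (hs : 0 ≤ s) (hst : s ≤ t) (hsx : s ≤ x) (hx : 0 ≤ x) :
    cl 0 t x = min t x := by
  unfold cl
  exact max_eq_right (le_min (hs.trans hst) hx)

lemma F_zero_eq (s t : ℝ) (hs : 0 ≤ s) (hst : s ≤ t) (ht : t ≤ 1) : F μ s t 0 = μ t s := by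
  unfold F
  rw [pow_zero, Finset.sum_range_one]
  norm_num
  rw [cl_of_ge ht hst, cl_of_le hs hst]

lemma F_sub_mu (s t : ℝ) (hs : 0 ≤ s) (hst : s ≤ t) (ht : t ≤ 1) (N : ℕ) :
    ‖F μ s t N - μ t s‖ ≤ c₁ * ∑ n ∈ Finset.range N, W θ s t n := by
  have htel : F μ s t N - μ t s = ∑ n ∈ Finset.range N, (F μ s t (n+1) - F μ s t n) := by
    rw [Finset.sum_range_sub (fun n => F μ s t n) N, F_zero_eq hθ hc₁ hμ s t hs hst ht]
  rw [htel, Finset.mul_sum]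
  refine (norm_sum_le _ _).trans (Finset.sum_le_sum fun n _ => ?_)
  exact step_bound hθ hc₁ hμ s t hs hst ht n

lemma cmp_bound (s t : ℝ) (hs : 0 ≤ s) (hst : s ≤ t) (ht : t ≤ 1) (n : ℕ) :
    ‖F μ 0 t n - F μ 0 s n - F μ s t n‖ ≤ c₁ * ((2:ℝ)^(1-θ:ℝ))^n := by
  have h2n : (0:ℝ) < 2^n := by positivity
  unfold F
  rw [← Finset.sum_sub_distrib, ← Finset.sum_sub_distrib]
  refine (norm_sum_le _ _).trans ?_
  have hterm : ∀ k ∈ Finset.range (2^n),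
      ‖μ (cl 0 t (((k:ℝ)+1)/2^n)) (cl 0 t ((k:ℝ)/2^n))
        - μ (cl 0 s (((k:ℝ)+1)/2^n)) (cl 0 s ((k:ℝ)/2^n))
        - μ (cl s t (((k:ℝ)+1)/2^n)) (cl s t ((k:ℝ)/2^n))‖ ≤ c₁ * (((2:ℝ)^n)⁻¹)^θ := by
    intro k hk
    have hk' : k < 2^n := Finset.mem_range.mp hk
    set a := (k:ℝ)/2^n with hadef
    set b := ((k:ℝ)+1)/2^n with hbdef
    have ha0 : 0 ≤ a := by positivity
    have hb0 : 0 ≤ b := by positivity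
    have hba : b - a = ((2:ℝ)^n)⁻¹ := by rw [hadef, hbdef]; field_simp; ring
    have hab : a ≤ b := by
      have : (0:ℝ) < ((2:ℝ)^n)⁻¹ := by positivity
      linarith
    have hb1 : b ≤ 1 := by
      rw [hbdef, div_le_one h2n]
      have : (k:ℝ)+1 ≤ ((2^n : ℕ):ℝ) := by exact_mod_cast Nat.succ_le_of_lt hk'
      simpa using this
    have hbt : min t b ≤ 1 := (min_le_left _ _).trans ht
    have hc₁' : (0:ℝ) ≤ c₁ := le_of_lt hc₁
    rcases le_or_gt s a with hsa | has
    · -- s ≤ a : everything cancels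
      have e1 : cl 0 t a = min t a := cl_zero_eq s t a hs hst hsa ha0
      have e2 : cl 0 t b = min t b := cl_zero_eq s t b hs hst (hsa.trans hab) hb0
      have e3 : cl 0 s a = s := cl_of_ge hsa hs
      have e4 : cl 0 s b = s := cl_of_ge (hsa.trans hab) hs
      have e5 : cl s t a = min t a := max_eq_right (le_min hst hsa)
      have e6 : cl s t b = min t b := max_eq_right (le_min hst (hsa.trans hab))
      rw [e1, e2, e3, e4, e5, e6]
      have : μ (min t b) (min t a) - μ s s - μ (min t b) (min t a) = -(μ s s) := by abel
      rw [this, norm_neg, mu_self hθ hμ s hs (hst.trans ht), norm_zero]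
      positivity
    · rcases le_or_gt b s with hbs | hsb
      · -- b ≤ s : everything cancels
        have e1 : cl 0 t a = a := cl_of_between ha0 ((hab.trans hbs).trans hst)
        have e2 : cl 0 t b = b := cl_of_between hb0 (hbs.trans hst)
        have e3 : cl 0 s a = a := cl_of_between ha0 (hab.trans hbs)
        have e4 : cl 0 s b = b := cl_of_between hb0 hbs
        have e5 : cl s t a = s := cl_of_le (hab.trans hbs) hst
        have e6 : cl s t b = s := cl_of_le hbs hst
        rw [e1, e2, e3, e4, e5, e6]
        have : μ b a - μ b a - μ s s = -(μ s s) := by abel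
        rw [this, norm_neg, mu_self hθ hμ s hs (hst.trans ht), norm_zero]
        positivity
      · -- a < s < b (well, a ≤ s ≤ b)
        have has' : a ≤ s := le_of_lt has
        have hsb' : s ≤ b := le_of_lt hsb
        have e1 : cl 0 t a = a := cl_of_between ha0 ((has'.trans hst))
        have e2 : cl 0 t b = min t b := cl_zero_eq s t b hs hst hsb' hb0
        have e3 : cl 0 s a = a := cl_of_between ha0 has'
        have e4 : cl 0 s b = s := cl_of_ge hsb' hs
        have e5 : cl s t a = s := cl_of_le has' hst
        have e6 : cl s t b = min t b := max_eq_right (le_min hst hsb')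
        rw [e1, e2, e3, e4, e5, e6]
        have hre : μ (min t b) a - μ s a - μ (min t b) s
            = μ (min t b) a - (μ (min t b) s + μ s a) := by abel
        rw [hre]
        refine (hμ a s (min t b) ha0 has' (le_min hst hsb') hbt).trans ?_
        refine mul_le_mul_of_nonneg_left ?_ hc₁'
        refine Real.rpow_le_rpow (sub_nonneg.mpr (has'.trans (le_min hst hsb'))) ?_ (by linarith)
        have : min t b - a ≤ b - a := by
          have := min_le_right t b
          linarith
        rw [hba] at this
        exact this
  refine (Finset.sum_le_sum hterm).trans ?_
  rw [Finset.sum_const, nsmul_eq_mul, Finset.card_range]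
  have : ((2^n : ℕ):ℝ) = (2:ℝ)^n := by push_cast; ring
  rw [this, ← two_pow_aux θ n]
  ring_nf
  exact le_refl _


omit hθ hc₁ hμ in
lemma two_pow_aux2 (n : ℕ) : ((2:ℝ)^(1-θ:ℝ))^n = (((2:ℝ)^n)⁻¹)^(θ-1:ℝ) := by
  have h2 : (0:ℝ) ≤ 2 := by norm_num
  rw [← Real.rpow_natCast ((2:ℝ)^(1-θ:ℝ)) n, ← Real.rpow_mul h2,
    ← Real.rpow_natCast 2 n, ← Real.rpow_neg h2, ← Real.rpow_mul h2]
  congr 1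
  ring

omit hθ hc₁ hμ in
lemma mid_inj_aux {n k n' k' : ℕ} (hnn : n ≤ n') (heq : mid n k = mid n' k') :
    n = n' ∧ k = k' := by
  unfold mid at heq
  rw [div_eq_div_iff (by positivity) (by positivity)] at heq
  have hN : (2*k+1) * 2^(n'+1) = (2*k'+1) * 2^(n+1) := by exact_mod_cast heq
  obtain ⟨d, rfl⟩ : ∃ d, n' = n + d := ⟨n'-n, by omega⟩
  have hp : (2:ℕ)^(n+d+1) = 2^(n+1) * 2^d := by rw [← pow_add]; congr 1; omega
  rw [hp, ← mul_assoc] at hN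
  have hpos : 0 < (2:ℕ)^(n+1) := Nat.pow_pos (by norm_num)
  have hN2 : (2*k+1) * 2^d = 2*k'+1 := by
    have h3 : (2*k+1) * 2^(n+1) * 2^d = (2*k+1) * 2^d * 2^(n+1) := by ring
    rw [h3] at hN
    exact Nat.eq_of_mul_eq_mul_right hpos hN
  rcases Nat.eq_zero_or_pos d with hd | hd
  · subst hd; constructor
    · omega
    · simp at hN2; omega
  · exfalso
    obtain ⟨e, rfl⟩ : ∃ e, d = e + 1 := ⟨d-1, by omega⟩
    rw [pow_succ, ← mul_assoc] at hN2
    set m := (2*k+1) * 2^e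
    omega

omit hθ hc₁ hμ in
lemma mid_eq_of_close {n k n' k' : ℕ} (hnn : n ≤ n')
    (h : |mid n k - mid n' k'| < ((2:ℝ)^(n'+1))⁻¹) : mid n k = mid n' k' := by
  have hpos : (0:ℝ) < 2^(n'+1) := by positivity
  have hpow : (2:ℝ)^(n'+1) = 2^(n+1) * 2^(n'-n) := by rw [← pow_add]; congr 1; omega
  have e : mid n k = (((2*k+1)*2^(n'-n) : ℕ):ℝ)/2^(n'+1) := by
    unfold mid
    rw [div_eq_div_iff (by positivity) (by positivity)]
    push_cast
    rw [hpow]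
    ring
  have e' : mid n' k' = (((2*k'+1) : ℕ):ℝ)/2^(n'+1) := by
    unfold mid; push_cast; ring_nf
  rw [e, e'] at h ⊢
  rw [div_sub_div_same, abs_div, abs_of_pos hpos, div_lt_iff₀ hpos, inv_mul_cancel₀ (ne_of_gt hpos)] at h
  have h2 := abs_lt.mp h
  have hAB : ((2*k+1)*2^(n'-n) : ℕ) = ((2*k'+1) : ℕ) := by
    have a1 : (((2*k+1)*2^(n'-n) : ℕ):ℝ) < ((2*k'+1 : ℕ):ℝ) + 1 := by linarith [h2.2]
    have a2 : (((2*k'+1) : ℕ):ℝ) < (((2*k+1)*2^(n'-n) : ℕ):ℝ) + 1 := by linarith [h2.1]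
    have b1 : ((2*k+1)*2^(n'-n) : ℕ) < (2*k'+1 : ℕ) + 1 := by exact_mod_cast a1
    have b2 : ((2*k'+1) : ℕ) < ((2*k+1)*2^(n'-n) : ℕ) + 1 := by exact_mod_cast a2
    omega
  rw [hAB]

omit hθ hc₁ hμ in
lemma dyadic_unique {s t : ℝ} {n k n' k' : ℕ}
    (h1 : s < mid n k) (h2 : mid n k < t) (h1' : s < mid n' k') (h2' : mid n' k' < t)
    (hc : t - s < ((2:ℝ)^(n+1))⁻¹) (hc' : t - s < ((2:ℝ)^(n'+1))⁻¹) :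
    n = n' ∧ k = k' := by
  have habs : ∀ {m j m' j' : ℕ}, s < mid m j → mid m j < t → s < mid m' j' → mid m' j' < t →
      t - s < ((2:ℝ)^(m'+1))⁻¹ → |mid m j - mid m' j'| < ((2:ℝ)^(m'+1))⁻¹ := by
    intro m j m' j' a1 a2 a3 a4 a5
    rw [abs_lt]
    constructor <;> linarith
  rcases le_total n n' with hnn | hnn
  · exact mid_inj_aux hnn (mid_eq_of_close hnn (habs h1 h2 h1' h2' hc'))
  · have := mid_inj_aux hnn (mid_eq_of_close hnn (habs h1' h2' h1 h2 hc))
    exact ⟨this.1.symm, this.2.symm⟩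

omit hθ hc₁ hμ in
lemma card_K_le {s t : ℝ} (hst : s < t) (n : ℕ) :
    (((Finset.range (2^n)).filter (fun k => s < mid n k ∧ mid n k < t)).card : ℝ)
      ≤ (t-s)*2^n + 1 := by
  have h2n : (0:ℝ) < 2^n := by positivity
  set K := (Finset.range (2^n)).filter (fun k => s < mid n k ∧ mid n k < t) with hK
  rcases K.eq_empty_or_nonempty with he | hne
  · rw [he]
    simp only [Finset.card_empty, Nat.cast_zero]
    nlinarith [mul_pos (sub_pos.2 hst) h2n]
  · set k₀ := K.min' hne with hk₀
    set k₁ := K.max' hne with hk₁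
    have hsub : K ⊆ Finset.Icc k₀ k₁ := fun k hk =>
      Finset.mem_Icc.2 ⟨K.min'_le k hk, K.le_max' k hk⟩
    have hk01 : k₀ ≤ k₁ := K.min'_le _ (K.max'_mem hne)
    have hcard : K.card ≤ k₁ + 1 - k₀ := by
      refine le_trans (Finset.card_le_card hsub) ?_
      rw [Nat.card_Icc]
    have hm0 := Finset.mem_filter.mp (K.min'_mem hne)
    have hm1 := Finset.mem_filter.mp (K.max'_mem hne)
    have hmid0 : s < mid n k₀ := hm0.2.1
    have hmid1 : mid n k₁ < t := hm1.2.2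
    have ediff : mid n k₁ - mid n k₀ = ((k₁:ℝ) - k₀)/2^n := by
      unfold mid
      field_simp
      ring
    have hdiff : ((k₁:ℝ) - k₀)/2^n < t - s := by rw [← ediff]; linarith
    rw [div_lt_iff₀ h2n] at hdiff
    have hcast : (K.card : ℝ) ≤ (k₁:ℝ) + 1 - k₀ := by
      have : ((k₁ + 1 - k₀ : ℕ):ℝ) = (k₁:ℝ) + 1 - k₀ := by
        rw [Nat.cast_sub (by omega)]
        push_cast
        ring
      rw [← this]
      exact_mod_cast hcard
    linarith

omit hθ hc₁ hμ in
lemma geom_tail_le {r : ℝ} (h0 : 0 ≤ r) (h1 : r < 1) (M : ℕ) :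
    ∑ j ∈ Finset.range M, r^j ≤ (1-r)⁻¹ := by
  rw [← tsum_geometric_of_lt_one h0 h1]
  exact Summable.sum_le_tsum (Finset.range M) (fun i _ => pow_nonneg h0 i)
    (summable_geometric_of_lt_one h0 h1)

omit hc₁ hμ in
lemma W_sum_le (s t : ℝ) (hst : s < t) (N : ℕ) :
    ∑ n ∈ Finset.range N, W θ s t n
      ≤ (1 + 3 * (2:ℝ)^(θ-1:ℝ) * (1 - (2:ℝ)^(1-θ:ℝ))⁻¹) * (t-s)^θ := by
  have hts : (0:ℝ) < t - s := sub_pos.2 hst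
  have hθ0 : (0:ℝ) ≤ θ := by linarith
  set r : ℝ := (2:ℝ)^(1-θ:ℝ) with hr
  have hr0 : 0 ≤ r := Real.rpow_nonneg (by norm_num) _
  have hr1 : r < 1 := Real.rpow_lt_one_of_one_lt_of_neg (by norm_num) (by linarith)
  have h1r : 0 < 1 - r := by linarith
  have htsθ : (0:ℝ) ≤ (t-s)^θ := Real.rpow_nonneg (le_of_lt hts) _
  have h2pow : (0:ℝ) < (2:ℝ)^(θ-1:ℝ) := Real.rpow_pos_of_pos (by norm_num) _
  set K : ℕ → Finset ℕ :=
    fun n => (Finset.range (2^n)).filter (fun k => s < mid n k ∧ mid n k < t) with hKdef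
  have hW : ∀ n, W θ s t n = ((K n).card : ℝ) * (min ((2^n:ℝ))⁻¹ (t-s))^θ := by
    intro n
    unfold W
    rw [Finset.sum_const, nsmul_eq_mul]
  have hmin0 : ∀ n : ℕ, (0:ℝ) ≤ min ((2^n:ℝ))⁻¹ (t-s) :=
    fun n => le_min (by positivity) (le_of_lt hts)
  set P : ℕ → Prop := fun n => t - s < ((2:ℝ)^(n+1))⁻¹ with hPdef
  rw [← Finset.sum_filter_add_sum_filter_not (Finset.range N) P]
  have hcoarse : ∑ n ∈ (Finset.range N).filter P, W θ s t n ≤ (t-s)^θ := by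
    have hcard1 : ∑ n ∈ (Finset.range N).filter P, (K n).card ≤ 1 := by
      rw [← Finset.card_sigma]
      refine Finset.card_le_one.mpr ?_
      rintro ⟨n, k⟩ hp ⟨n', k'⟩ hq
      rw [Finset.mem_sigma] at hp hq
      have hn := Finset.mem_filter.mp hp.1
      have hn' := Finset.mem_filter.mp hq.1
      have hk := Finset.mem_filter.mp hp.2
      have hk' := Finset.mem_filter.mp hq.2
      obtain ⟨e1, e2⟩ := dyadic_unique hk.2.1 hk.2.2 hk'.2.1 hk'.2.2 hn.2 hn'.2
      subst e1; subst e2; rfl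
    calc ∑ n ∈ (Finset.range N).filter P, W θ s t n
        ≤ ∑ n ∈ (Finset.range N).filter P, ((K n).card : ℝ) * (t-s)^θ := by
          refine Finset.sum_le_sum fun n _ => ?_
          rw [hW n]
          refine mul_le_mul_of_nonneg_left ?_ (Nat.cast_nonneg _)
          exact Real.rpow_le_rpow (hmin0 n) (min_le_right _ _) hθ0
      _ = ((∑ n ∈ (Finset.range N).filter P, (K n).card : ℕ) : ℝ) * (t-s)^θ := by
          rw [← Finset.sum_mul, Nat.cast_sum]
      _ ≤ 1 * (t-s)^θ := by
          refine mul_le_mul_of_nonneg_right ?_ htsθ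
          exact_mod_cast hcard1
      _ = (t-s)^θ := one_mul _
  have hfine : ∑ n ∈ (Finset.range N).filter (fun n => ¬ P n), W θ s t n
      ≤ 3 * (2:ℝ)^(θ-1:ℝ) * (1-r)⁻¹ * (t-s)^θ := by
    set Fi := (Finset.range N).filter (fun n => ¬ P n) with hFi
    have hterm : ∀ n ∈ Fi, W θ s t n ≤ 3 * (t-s) * r^n := by
      intro n hn
      have hnP : ¬ P n := (Finset.mem_filter.mp hn).2
      simp only [hPdef] at hnP
      push_neg at hnP
      have h2n : (0:ℝ) < 2^n := by positivity
      have h2n1 : (0:ℝ) < 2^(n+1) := by positivity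
      have hone : (1:ℝ) ≤ 2 * ((t-s) * 2^n) := by
        have h := mul_le_mul_of_nonneg_right hnP (le_of_lt h2n1)
        rw [inv_mul_cancel₀ (ne_of_gt h2n1)] at h
        calc (1:ℝ) ≤ (t-s)*2^(n+1) := h
          _ = 2*((t-s)*2^n) := by rw [pow_succ]; ring
      have hcard := card_K_le hst n
      rw [hW n]
      calc ((K n).card : ℝ) * (min ((2^n:ℝ))⁻¹ (t-s))^θ
          ≤ (3*(t-s)*2^n) * (((2:ℝ)^n)⁻¹)^θ := by
            refine mul_le_mul ?_ (Real.rpow_le_rpow (hmin0 n) (min_le_left _ _) hθ0)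
              (Real.rpow_nonneg (hmin0 n) _) (by nlinarith [mul_pos hts h2n])
            calc ((K n).card : ℝ) ≤ (t-s)*2^n + 1 := hcard
              _ ≤ 3*(t-s)*2^n := by nlinarith [hone]
        _ = 3*(t-s) * ((2:ℝ)^n * (((2:ℝ)^n)⁻¹)^θ) := by ring
        _ = 3*(t-s) * r^n := by rw [two_pow_aux θ n]
    rcases Fi.eq_empty_or_nonempty with he | hne
    · rw [he, Finset.sum_empty]
      have : (0:ℝ) ≤ (1-r)⁻¹ := inv_nonneg.2 (le_of_lt h1r)
      have h3 : (0:ℝ) ≤ 3 * (2:ℝ)^(θ-1:ℝ) * (1-r)⁻¹ := by positivity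
      exact mul_nonneg h3 htsθ
    · set n₁ := Fi.min' hne with hn₁
      have hn₁Fi := Fi.min'_mem hne
      have hn₁P : ¬ P n₁ := (Finset.mem_filter.mp hn₁Fi).2
      simp only [hPdef] at hn₁P
      push_neg at hn₁P
      have hts3 : (0:ℝ) ≤ 3*(t-s) := by nlinarith
      have hsub : Fi ⊆ Finset.Ico n₁ N := by
        intro n hn
        rw [Finset.mem_Ico]
        exact ⟨Fi.min'_le n hn, Finset.mem_range.mp (Finset.mem_filter.mp hn).1⟩
      have hsum1 : ∑ n ∈ Fi, W θ s t n ≤ ∑ n ∈ Fi, 3*(t-s)*r^n := Finset.sum_le_sum hterm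
      have hsum2 : ∑ n ∈ Fi, 3*(t-s)*r^n ≤ ∑ n ∈ Finset.Ico n₁ N, 3*(t-s)*r^n := by
        refine Finset.sum_le_sum_of_subset_of_nonneg hsub fun n _ _ =>
          mul_nonneg hts3 (pow_nonneg hr0 n)
      have hsum3 : ∑ n ∈ Finset.Ico n₁ N, 3*(t-s)*r^n ≤ 3*(t-s) * (r^n₁ * (1-r)⁻¹) := by
        rw [← Finset.mul_sum]
        refine mul_le_mul_of_nonneg_left ?_ hts3
        rw [Finset.sum_Ico_eq_sum_range]
        calc ∑ i ∈ Finset.range (N - n₁), r^(n₁ + i)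
            = r^n₁ * ∑ i ∈ Finset.range (N - n₁), r^i := by
              rw [Finset.mul_sum]
              refine Finset.sum_congr rfl fun i _ => by rw [pow_add]
          _ ≤ r^n₁ * (1-r)⁻¹ :=
              mul_le_mul_of_nonneg_left (geom_tail_le hr0 hr1 _) (pow_nonneg hr0 _)
      have hrn₁ : r^n₁ ≤ (2:ℝ)^(θ-1:ℝ) * (t-s)^(θ-1:ℝ) := by
        have hinv : ((2:ℝ)^n₁)⁻¹ ≤ 2*(t-s) := by
          have h2n1 : (0:ℝ) < 2^(n₁+1) := by positivity
          have he2 : ((2:ℝ)^n₁)⁻¹ = 2 * ((2:ℝ)^(n₁+1))⁻¹ := by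
            rw [pow_succ]
            field_simp
          rw [he2]
          linarith [hn₁P]
        rw [hr, two_pow_aux2 (θ := θ) n₁]
        calc (((2:ℝ)^n₁)⁻¹)^(θ-1:ℝ) ≤ (2*(t-s))^(θ-1:ℝ) :=
            Real.rpow_le_rpow (by positivity) hinv (by linarith)
          _ = (2:ℝ)^(θ-1:ℝ) * (t-s)^(θ-1:ℝ) := Real.mul_rpow (by norm_num) (le_of_lt hts)
      have hmul : (t-s) * (t-s)^(θ-1:ℝ) = (t-s)^θ := by
        nth_rewrite 1 [← Real.rpow_one (t-s)]
        rw [← Real.rpow_add hts]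
        norm_num
      have hfinal : 3*(t-s) * (r^n₁ * (1-r)⁻¹) ≤ 3 * (2:ℝ)^(θ-1:ℝ) * (1-r)⁻¹ * (t-s)^θ := by
        have hinvr : (0:ℝ) ≤ (1-r)⁻¹ := inv_nonneg.2 (le_of_lt h1r)
        calc 3*(t-s) * (r^n₁ * (1-r)⁻¹)
            ≤ 3*(t-s) * (((2:ℝ)^(θ-1:ℝ) * (t-s)^(θ-1:ℝ)) * (1-r)⁻¹) :=
              mul_le_mul_of_nonneg_left (mul_le_mul_of_nonneg_right hrn₁ hinvr) hts3
          _ = 3 * (2:ℝ)^(θ-1:ℝ) * (1-r)⁻¹ * ((t-s) * (t-s)^(θ-1:ℝ)) := by ring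
          _ = 3 * (2:ℝ)^(θ-1:ℝ) * (1-r)⁻¹ * (t-s)^θ := by rw [hmul]
      linarith
  linarith

lemma F_increment (s t : ℝ) (hs : 0 ≤ s) (hst : s ≤ t) (ht : t ≤ 1) (n : ℕ) :
    ‖(F μ 0 t n - F μ 0 s n) - μ t s‖
      ≤ c₁ * ((2:ℝ)^(1-θ:ℝ))^n
        + c₁ * ((1 + 3 * (2:ℝ)^(θ-1:ℝ) * (1 - (2:ℝ)^(1-θ:ℝ))⁻¹) * (t-s)^θ) := by
  rcases eq_or_lt_of_le hst with rfl | hlt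
  · rw [sub_self, zero_sub, norm_neg, mu_self hθ hμ s hs ht, norm_zero, sub_self,
      Real.zero_rpow (by positivity), mul_zero, mul_zero, add_zero]
    exact mul_nonneg (le_of_lt hc₁) (pow_nonneg (Real.rpow_nonneg (by norm_num) _) n)
  · have h1 := cmp_bound hθ hc₁ hμ s t hs hst ht n
    have h2 : ‖F μ s t n - μ t s‖
        ≤ c₁ * ((1 + 3 * (2:ℝ)^(θ-1:ℝ) * (1 - (2:ℝ)^(1-θ:ℝ))⁻¹) * (t-s)^θ) := by
      refine (F_sub_mu hθ hc₁ hμ s t hs hst ht n).trans ?_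
      exact mul_le_mul_of_nonneg_left (W_sum_le hθ s t hlt n) (le_of_lt hc₁)
    calc ‖(F μ 0 t n - F μ 0 s n) - μ t s‖
        ≤ ‖F μ 0 t n - F μ 0 s n - F μ s t n‖ + ‖F μ s t n - μ t s‖ := by
          have he : (F μ 0 t n - F μ 0 s n) - μ t s
              = (F μ 0 t n - F μ 0 s n - F μ s t n) + (F μ s t n - μ t s) := by abel
          rw [he]
          exact norm_add_le _ _
      _ ≤ _ := add_le_add h1 h2

end Main

end SewingAux

/-- **Sewing lemma.** Given an almost additive family `μ` on `[0,1]` with values in a Banach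
space, with constant `c₁` and exponent `θ > 1`, there is a constant `C` and a unique function
`φ` vanishing at `0` whose increments are approximated by `μ` up to `C (t-s)^θ`. -/
theorem sewing_lemma
    {E : Type*} [NormedAddCommGroup E] [NormedSpace ℝ E] [CompleteSpace E]
    (θ c₁ : ℝ) (hθ : 1 < θ) (hc₁ : 0 < c₁)
    (μ : ℝ → ℝ → E)
    (hμ : ∀ s u t : ℝ, 0 ≤ s → s ≤ u → u ≤ t → t ≤ 1 →
      ‖μ t s - (μ t u + μ u s)‖ ≤ c₁ * (t - s) ^ θ) :
    ∃ C : ℝ, ∃ φ : ℝ → E, φ 0 = 0 ∧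
      (∀ s t : ℝ, 0 ≤ s → s ≤ t → t ≤ 1 → ‖φ t - φ s - μ t s‖ ≤ C * (t - s) ^ θ) ∧
      ∀ ψ₁ ψ₂ : ℝ → E, ψ₁ 0 = 0 → ψ₂ 0 = 0 →
        (∃ C₁ : ℝ, ∀ s t : ℝ, 0 ≤ s → s ≤ t → t ≤ 1 →
          ‖ψ₁ t - ψ₁ s - μ t s‖ ≤ C₁ * (t - s) ^ θ) →
        (∃ C₂ : ℝ, ∀ s t : ℝ, 0 ≤ s → s ≤ t → t ≤ 1 →
          ‖ψ₂ t - ψ₂ s - μ t s‖ ≤ C₂ * (t - s) ^ θ) →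
        ∀ t : ℝ, 0 ≤ t → t ≤ 1 → ψ₁ t = ψ₂ t := by
  classical
  haveI : Nonempty E := ⟨0⟩
  have hr0 : (0:ℝ) ≤ (2:ℝ)^(1-θ:ℝ) := Real.rpow_nonneg (by norm_num) _
  have hr1 : (2:ℝ)^(1-θ:ℝ) < 1 :=
    Real.rpow_lt_one_of_one_lt_of_neg (by norm_num) (by linarith)
  have hcauchy : ∀ u : ℝ, 0 ≤ u → u ≤ 1 → CauchySeq (SewingAux.F μ 0 u) := by
    intro u h0 h1
    refine cauchySeq_of_le_geometric ((2:ℝ)^(1-θ:ℝ)) c₁ hr1 fun n => ?_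
    rw [dist_eq_norm, norm_sub_rev]
    exact (SewingAux.step_bound hθ hc₁ hμ 0 u le_rfl h0 h1 n).trans
      (mul_le_mul_of_nonneg_left (SewingAux.W_le_crude hθ 0 u h0 n) (le_of_lt hc₁))
  set φ : ℝ → E := fun u => limUnder Filter.atTop (SewingAux.F μ 0 u) with hφ
  have htend : ∀ u : ℝ, 0 ≤ u → u ≤ 1 →
      Filter.Tendsto (SewingAux.F μ 0 u) Filter.atTop (nhds (φ u)) :=
    fun u h0 h1 => (hcauchy u h0 h1).tendsto_limUnder
  have hφ0 : φ 0 = 0 := by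
    have hzero : ∀ n, SewingAux.F μ 0 0 n = 0 := by
      intro n
      unfold SewingAux.F
      refine Finset.sum_eq_zero fun k _ => ?_
      have hcl : ∀ x : ℝ, 0 ≤ x → SewingAux.cl 0 0 x = 0 := by
        intro x hx
        unfold SewingAux.cl
        rw [min_eq_left hx]
        simp
      rw [hcl _ (by positivity), hcl _ (by positivity),
        SewingAux.mu_self hθ hμ 0 le_rfl zero_le_one]
    have h2 : Filter.Tendsto (SewingAux.F μ 0 0) Filter.atTop (nhds 0) := by
      rw [show SewingAux.F μ 0 0 = fun _ => (0:E) from funext hzero]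
      exact tendsto_const_nhds
    exact tendsto_nhds_unique (htend 0 le_rfl zero_le_one) h2
  refine ⟨c₁ * (1 + 3 * (2:ℝ)^(θ-1:ℝ) * (1 - (2:ℝ)^(1-θ:ℝ))⁻¹), φ, hφ0, ?_, ?_⟩
  · -- increment bound
    intro s t hs hst ht
    have htnorm : Filter.Tendsto (fun n => ‖(SewingAux.F μ 0 t n - SewingAux.F μ 0 s n) - μ t s‖)
        Filter.atTop (nhds ‖φ t - φ s - μ t s‖) :=
      (((htend t (hs.trans hst) ht).sub (htend s hs (hst.trans ht))).sub tendsto_const_nhds).norm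
    have hRHS : Filter.Tendsto (fun n : ℕ => c₁ * ((2:ℝ)^(1-θ:ℝ))^n
        + c₁ * ((1 + 3 * (2:ℝ)^(θ-1:ℝ) * (1 - (2:ℝ)^(1-θ:ℝ))⁻¹) * (t-s)^θ))
        Filter.atTop (nhds (c₁ * 0
          + c₁ * ((1 + 3 * (2:ℝ)^(θ-1:ℝ) * (1 - (2:ℝ)^(1-θ:ℝ))⁻¹) * (t-s)^θ))) :=
      (((tendsto_pow_atTop_nhds_zero_of_lt_one hr0 hr1).const_mul c₁).add tendsto_const_nhds)
    have hle := le_of_tendsto_of_tendsto' htnorm hRHS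
      (fun n => SewingAux.F_increment hθ hc₁ hμ s t hs hst ht n)
    have he : c₁ * 0 + c₁ * ((1 + 3 * (2:ℝ)^(θ-1:ℝ) * (1 - (2:ℝ)^(1-θ:ℝ))⁻¹) * (t-s)^θ)
        = c₁ * (1 + 3 * (2:ℝ)^(θ-1:ℝ) * (1 - (2:ℝ)^(1-θ:ℝ))⁻¹) * (t-s)^θ := by ring
    rw [he] at hle
    exact hle
  · -- uniqueness
    rintro ψ₁ ψ₂ h10 h20 ⟨C₁, hC₁⟩ ⟨C₂, hC₂⟩ t ht0 ht1
    rcases eq_or_lt_of_le ht0 with rfl | htpos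
    · rw [h10, h20]
    have key : ∀ n : ℕ, 1 ≤ n →
        ‖ψ₁ t - ψ₂ t‖ ≤ (C₁ + C₂) * t^θ * ((n:ℝ))^(1-θ:ℝ) := by
      intro n hn1
      have hn0 : (0:ℝ) < n := by exact_mod_cast hn1
      set g : ℕ → E := fun k => ψ₁ ((k:ℝ)*t/n) - ψ₂ ((k:ℝ)*t/n) with hg
      have tel := Finset.sum_range_sub g n
      have egn : g n = ψ₁ t - ψ₂ t := by
        rw [hg]
        have e : ((n:ℝ))*t/n = t := by field_simp
        simp only [e]
      have eg0 : g 0 = 0 := by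
        rw [hg]
        simp [h10, h20]
      rw [egn, eg0, sub_zero] at tel
      have hterm : ∀ k ∈ Finset.range n, ‖g (k+1) - g k‖ ≤ (C₁ + C₂) * (t/n)^θ := by
        intro k hk
        have hkn : k < n := Finset.mem_range.mp hk
        set a : ℝ := (k:ℝ)*t/n with ha
        set b : ℝ := ((k+1:ℕ):ℝ)*t/n with hb
        have ha0 : 0 ≤ a := div_nonneg (mul_nonneg (Nat.cast_nonneg k) ht0) (le_of_lt hn0)
        have hba : b - a = t/n := by
          rw [ha, hb]
          push_cast
          field_simp
          ring
        have htn : 0 ≤ t/n := div_nonneg ht0 (le_of_lt hn0)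
        have hab : a ≤ b := by linarith
        have hbt : b ≤ t := by
          rw [hb, div_le_iff₀ hn0]
          have : ((k+1:ℕ):ℝ) ≤ (n:ℝ) := by exact_mod_cast hkn
          nlinarith
        have hb1 : b ≤ 1 := hbt.trans ht1
        have e1 := hC₁ a b ha0 hab hb1
        have e2 := hC₂ a b ha0 hab hb1
        have he : g (k+1) - g k = (ψ₁ b - ψ₁ a - μ b a) - (ψ₂ b - ψ₂ a - μ b a) := by
          rw [hg, ha, hb]
          push_cast
          abel
        rw [he, hba] at *
        calc ‖(ψ₁ b - ψ₁ a - μ b a) - (ψ₂ b - ψ₂ a - μ b a)‖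
            ≤ ‖ψ₁ b - ψ₁ a - μ b a‖ + ‖ψ₂ b - ψ₂ a - μ b a‖ := norm_sub_le _ _
          _ ≤ C₁ * (t/n)^θ + C₂ * (t/n)^θ := add_le_add e1 e2
          _ = (C₁ + C₂) * (t/n)^θ := by ring
      have hsum : ‖ψ₁ t - ψ₂ t‖ ≤ (n:ℝ) * ((C₁ + C₂) * (t/n)^θ) := by
        rw [← tel]
        refine (norm_sum_le _ _).trans ?_
        calc ∑ k ∈ Finset.range n, ‖g (k+1) - g k‖
            ≤ ∑ _k ∈ Finset.range n, (C₁ + C₂) * (t/n)^θ := Finset.sum_le_sum hterm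
          _ = (n:ℝ) * ((C₁ + C₂) * (t/n)^θ) := by
              rw [Finset.sum_const, nsmul_eq_mul, Finset.card_range]
      have hident : (n:ℝ) * ((C₁ + C₂) * (t/n)^θ) = (C₁ + C₂) * t^θ * ((n:ℝ))^(1-θ:ℝ) := by
        have hnθ : (0:ℝ) < (n:ℝ)^θ := Real.rpow_pos_of_pos hn0 θ
        rw [Real.div_rpow ht0 (le_of_lt hn0), Real.rpow_sub hn0, Real.rpow_one]
        field_simp
      rw [hident] at hsum
      exact hsum
    have hL : Filter.Tendsto (fun n : ℕ => (C₁ + C₂) * t^θ * ((n:ℝ))^(1-θ:ℝ))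
        Filter.atTop (nhds 0) := by
      have h1 : Filter.Tendsto (fun x : ℝ => x^(-(θ-1):ℝ)) Filter.atTop (nhds 0) :=
        tendsto_rpow_neg_atTop (by linarith)
      have h2 : Filter.Tendsto (fun n : ℕ => ((n:ℝ))^(1-θ:ℝ)) Filter.atTop (nhds 0) := by
        have := h1.comp tendsto_natCast_atTop_atTop (α := ℕ)
        simpa [Function.comp_def, show -(θ-1) = 1-θ by ring] using this
      simpa using h2.const_mul ((C₁ + C₂) * t^θ)
    have hnorm0 : ‖ψ₁ t - ψ₂ t‖ ≤ 0 := by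
      refine ge_of_tendsto hL ?_
      exact Filter.eventually_atTop.2 ⟨1, key⟩
    have : ψ₁ t - ψ₂ t = 0 := norm_le_zero_iff.mp hnorm0
    exact sub_eq_zero.mp this
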